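/- Let R = 𝔽_p[X^{1/p^∞}]/X (so R♭ = 𝔽_p⟦X^{1/p^∞}⟧ with X non-torsion). Then A_cris(R) is p-torsion free. More precisely, in the presentation A_cris(R) = W(R♭)⟨T⟩_PD / (X - T) (p-adically completed free PD polynomial algebra), if (X - T)·Σ b_n γ_n(T) = p·Σ a_n γ_n(T), then all b_n are divisible by p, and hence Σ a_n γ_n(T) maps to 0 in A_cris(R). -/
import Mathlib


/-- Let `R = 𝔽_p[X^{1/p^∞}]/X`, so that `R♭ = 𝔽_p⟦X^{1/p^∞}⟧` and
`W = W(R♭)` is `p`-torsion free with `X` (Teichmüller lift `ξ`) a non-torsion element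
(`ξ` is a nonzerodivisor modulo `p`).  Then `A_cris(R)` is `p`-torsion free.  More
precisely, in the presentation `A_cris(R) = W⟨T⟩_PD/(X - T)`, if
`(X - T)·Σ b_n γ_n(T) = p·Σ a_n γ_n(T)` — i.e. coefficientwise `p·a_0 = ξ·b_0` and
`p·a_{n+1} = ξ·b_{n+1} - (n+1)·b_n` — then all `b_n` are divisible by `p`, and hence
`Σ a_n γ_n(T)` lies in the ideal `(X - T)`, i.e. maps to `0` in `A_cris(R)`. -/
theorem stmt_12 (p : ℕ) (hp : p.Prime) (W : Type*) [CommRing W]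
    (htf : ∀ w : W, (p : W) * w = 0 → w = 0)
    (ξ : W) (hξ : ∀ w : W, (p : W) ∣ ξ * w → (p : W) ∣ w)
    (a b : ℕ → W)
    (ha : ∀ m : ℕ, ∃ N : ℕ, ∀ n ≥ N, a n ∈ Ideal.span {(p : W) ^ m})
    (hb : ∀ m : ℕ, ∃ N : ℕ, ∀ n ≥ N, b n ∈ Ideal.span {(p : W) ^ m})
    (h0 : (p : W) * a 0 = ξ * b 0)
    (hrec : ∀ n : ℕ, (p : W) * a (n + 1) = ξ * b (n + 1) - ((n + 1 : ℕ) : W) * b n) :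
    (∀ n : ℕ, (p : W) ∣ b n) ∧
    ∃ c : ℕ → W,
      (∀ m : ℕ, ∃ N : ℕ, ∀ n ≥ N, c n ∈ Ideal.span {(p : W) ^ m}) ∧
      a 0 = ξ * c 0 ∧
      ∀ n : ℕ, a (n + 1) = ξ * c (n + 1) - ((n + 1 : ℕ) : W) * c n := by
  -- Step 1: `p ∣ b n` for all `n`, by induction on `n`.
  have hdvd : ∀ n : ℕ, (p : W) ∣ b n := by
    intro n
    induction n with
    | zero => exact hξ _ ⟨a 0, h0.symm⟩
    | succ n ih =>
      apply hξ
      obtain ⟨w, hw⟩ := ih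
      refine ⟨a (n + 1) + ((n + 1 : ℕ) : W) * w, ?_⟩
      linear_combination -hrec n + ((n + 1 : ℕ) : W) * hw
  refine ⟨hdvd, ?_⟩
  -- Step 2: define `c n := b n / p`.
  choose c hc using hdvd
  refine ⟨c, ?_, ?_, ?_⟩
  · -- decay of `c`
    intro m
    obtain ⟨N, hN⟩ := hb (m + 1)
    refine ⟨N, fun n hn => ?_⟩
    obtain ⟨w, hw⟩ := Ideal.mem_span_singleton.mp (hN n hn)
    have : (p : W) * (c n - (p : W) ^ m * w) = 0 := by
      linear_combination hw - hc n
    rw [Ideal.mem_span_singleton]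
    exact ⟨w, by linear_combination htf _ this⟩
  · -- a 0 = ξ * c 0
    have : (p : W) * (a 0 - ξ * c 0) = 0 := by
      have := h0
      rw [hc 0] at this
      linear_combination this
    linear_combination htf _ this
  · intro n
    have : (p : W) * (a (n + 1) - (ξ * c (n + 1) - ((n + 1 : ℕ) : W) * c n)) = 0 := by
      have h := hrec n
      rw [hc (n + 1), hc n] at h
      linear_combination h
    linear_combination htf _ this
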